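/- There exist constants δ ∈ (0,1] and c₀ > 0 such that: for every smooth map η = (η₁,η₂) : ℝ² → ℝ², 2-periodic in each variable, satisfying the odevity conditions (η₁ even in y₂, η₂ odd in y₂), det(I + ∇η) = 1, and ‖∂₂η‖₂ ≤ δ, one has ‖∂₁η_j‖_{L^∞} ≤ c₀ ‖∂₂η‖₂ and ‖∂₂η_j‖_{L^∞} ≤ c₀ ‖∂₂²η‖₁ for j = 1,2, where the L^∞ norms are taken over the periodic cell (-1,1)². -/

import Mathlib

open MeasureTheory

noncomputable section

/-- A point of the plane `ℝ²`. -/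
abbrev Pt := ℝ × ℝ

/-- The periodic cell `(-1,1)²`. -/
def cell : Set Pt := Set.Ioo (-1 : ℝ) 1 ×ˢ Set.Ioo (-1 : ℝ) 1

/-- `f` is 2-periodic in each variable. -/
def Periodic2 (f : Pt → ℝ) : Prop :=
  (∀ y : Pt, f (y.1 + 2, y.2) = f y) ∧ ∀ y : Pt, f (y.1, y.2 + 2) = f y

/-- Partial derivative in the first variable. -/
def p1 (f : Pt → ℝ) : Pt → ℝ := fun y => fderiv ℝ f y (1, 0)

/-- Partial derivative in the second variable. -/
def p2 (f : Pt → ℝ) : Pt → ℝ := fun y => fderiv ℝ f y (0, 1)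

/-- Iterated partial derivative `∂₁^a ∂₂^b f`. -/
def pd (a b : ℕ) (f : Pt → ℝ) : Pt → ℝ := p1^[a] (p2^[b] f)

/-- Square of the `L²((-1,1)²)` norm. -/
def L2sq (f : Pt → ℝ) : ℝ := ∫ y in cell, (f y) ^ 2

/-- The `L²((-1,1)²)` norm `‖f‖₀`. -/
def L2 (f : Pt → ℝ) : ℝ := Real.sqrt (L2sq f)

/-- Square of the Sobolev norm `‖f‖_i² = Σ_{|α| ≤ i} ‖∂^α f‖₀²`. -/
def sobSq (i : ℕ) (f : Pt → ℝ) : ℝ :=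
  ∑ a ∈ Finset.range (i + 1), ∑ b ∈ Finset.range (i + 1 - a), L2sq (pd a b f)

/-- The Sobolev norm `‖f‖_i`. -/
def sob (i : ℕ) (f : Pt → ℝ) : ℝ := Real.sqrt (sobSq i f)

/-- Square of the homogeneous seminorm `‖∇^i f‖₀² = Σ_{|α| = i} ‖∂^α f‖₀²`. -/
def gradSq (i : ℕ) (f : Pt → ℝ) : ℝ :=
  ∑ a ∈ Finset.range (i + 1), L2sq (pd a (i - a) f)

/-- First component of a map `ℝ² → ℝ²`. -/
def comp1 (v : Pt → Pt) : Pt → ℝ := fun y => (v y).1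

/-- Second component of a map `ℝ² → ℝ²`. -/
def comp2 (v : Pt → Pt) : Pt → ℝ := fun y => (v y).2

/-- The odevity conditions: the first component is even in `y₂`, the second is odd. -/
def Odev (v : Pt → Pt) : Prop :=
  ∀ y : Pt, (v (y.1, -y.2)).1 = (v y).1 ∧ (v (y.1, -y.2)).2 = -(v y).2

/-- The incompressibility condition `det(I + ∇η) = 1`. -/
def DetCond (η : Pt → Pt) : Prop :=
  ∀ y : Pt, (1 + p1 (comp1 η) y) * (1 + p2 (comp2 η) y)
      - p2 (comp1 η) y * p1 (comp2 η) y = 1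

/-- Sobolev norm `‖v‖_i` of a vector field (components summed). -/
def sobV (i : ℕ) (v : Pt → Pt) : ℝ := Real.sqrt (sobSq i (comp1 v) + sobSq i (comp2 v))

/-- The vector field `∂₂v`. -/
def d2V (v : Pt → Pt) : Pt → Pt := fun y => (p2 (comp1 v) y, p2 (comp2 v) y)

lemma L2sq_nonneg (f : Pt → ℝ) : 0 ≤ L2sq f :=
  integral_nonneg fun y => sq_nonneg _

lemma contDiff_p1 {f : Pt → ℝ} (hf : ContDiff ℝ (⊤:ℕ∞) f) : ContDiff ℝ (⊤:ℕ∞) (p1 f) :=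
  ((contDiff_infty_iff_fderiv.mp hf).2).clm_apply contDiff_const

lemma contDiff_p2 {f : Pt → ℝ} (hf : ContDiff ℝ (⊤:ℕ∞) f) : ContDiff ℝ (⊤:ℕ∞) (p2 f) :=
  ((contDiff_infty_iff_fderiv.mp hf).2).clm_apply contDiff_const

lemma hasDerivAt_slice1 {f : Pt → ℝ} (hf : ContDiff ℝ (⊤:ℕ∞) f) (t x : ℝ) :
    HasDerivAt (fun s => f (s, t)) (p1 f (x, t)) x := by
  have hd : HasFDerivAt f (fderiv ℝ f (x,t)) (x,t) :=
    (hf.differentiable (by decide) (x,t)).hasFDerivAt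
  have hline : HasDerivAt (fun s : ℝ => ((s, t) : Pt)) ((1:ℝ), (0:ℝ)) x :=
    HasDerivAt.prodMk (hasDerivAt_id x) (hasDerivAt_const x t)
  simpa [p1, Function.comp_def] using hd.comp_hasDerivAt x hline

lemma hasDerivAt_slice2 {f : Pt → ℝ} (hf : ContDiff ℝ (⊤:ℕ∞) f) (x t : ℝ) :
    HasDerivAt (fun u => f (x, u)) (p2 f (x, t)) t := by
  have hd : HasFDerivAt f (fderiv ℝ f (x,t)) (x,t) :=
    (hf.differentiable (by decide) (x,t)).hasFDerivAt
  have hline : HasDerivAt (fun u : ℝ => ((x, u) : Pt)) ((0:ℝ), (1:ℝ)) t :=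
    HasDerivAt.prodMk (hasDerivAt_const t x) (hasDerivAt_id t)
  simpa [p2, Function.comp_def] using hd.comp_hasDerivAt t hline

lemma p1_p2_comm {f : Pt → ℝ} (hf : ContDiff ℝ (⊤:ℕ∞) f) : p1 (p2 f) = p2 (p1 f) := by
  funext y
  have hdf : ContDiff ℝ (⊤:ℕ∞) (fderiv ℝ f) := (contDiff_infty_iff_fderiv.mp hf).2
  have hsymm : IsSymmSndFDerivAt ℝ f y :=
    (hf.contDiffAt).isSymmSndFDerivAt (by rw [minSmoothness_of_isRCLikeNormedField]; exact WithTop.coe_le_coe.mpr le_top)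
  have e : ∀ v w : Pt, fderiv ℝ (fun z => fderiv ℝ f z v) y w
      = fderiv ℝ (fderiv ℝ f) y w v := by
    intro v w
    rw [fderiv_clm_apply (hdf.differentiable (by decide) y) (differentiableAt_const v)]
    simp
  show fderiv ℝ (fun z => fderiv ℝ f z (0,1)) y (1,0) = fderiv ℝ (fun z => fderiv ℝ f z (1,0)) y (0,1)
  rw [e, e]
  exact hsymm _ _

lemma avg1d {φ φ' : ℝ → ℝ} (hd : ∀ u, HasDerivAt φ (φ' u) u) (hc : Continuous φ')
    {x : ℝ} (hx : x ∈ Set.Icc (-1:ℝ) 1) :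
    |φ x - (∫ s in (-1:ℝ)..1, φ s) / 2| ≤ ∫ u in (-1:ℝ)..1, |φ' u| := by
  have hφ : Continuous φ := Differentiable.continuous (fun u => (hd u).differentiableAt)
  have hK : ∀ s ∈ Set.Icc (-1:ℝ) 1, |φ x - φ s| ≤ ∫ u in (-1:ℝ)..1, |φ' u| := by
    intro s hs
    have hftc : ∫ u in s..x, φ' u = φ x - φ s :=
      intervalIntegral.integral_eq_sub_of_hasDerivAt (fun u _ => hd u)
        (hc.intervalIntegrable _ _)
    rw [← hftc]
    have h1 : |∫ u in s..x, φ' u| ≤ |∫ u in s..x, (|φ' u|)| := by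
      simpa [Real.norm_eq_abs] using
        intervalIntegral.norm_integral_le_abs_integral_norm (f := φ') (a := s) (b := x)
          (μ := volume)
    refine h1.trans ?_
    have h2 : |∫ u in s..x, (|φ' u|)| ≤ |∫ u in (-1:ℝ)..1, (|φ' u|)| := by
      apply intervalIntegral.abs_integral_mono_interval
      · rw [Set.uIoc_of_le (by norm_num : (-1:ℝ) ≤ 1)]
        exact Set.Ioc_subset_Ioc (le_min hs.1 hx.1) (max_le hs.2 hx.2)
      · exact Filter.Eventually.of_forall fun u => abs_nonneg _
      · exact (hc.abs).intervalIntegrable _ _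
    refine h2.trans_eq (abs_of_nonneg ?_)
    exact intervalIntegral.integral_nonneg (by norm_num) fun u _ => abs_nonneg _
  have hsub : (∫ s in (-1:ℝ)..1, (φ x - φ s)) = 2 * φ x - ∫ s in (-1:ℝ)..1, φ s := by
    rw [intervalIntegral.integral_sub intervalIntegrable_const (hφ.intervalIntegrable _ _),
      intervalIntegral.integral_const]
    norm_num [two_smul]
  have hmain : |2 * φ x - ∫ s in (-1:ℝ)..1, φ s| ≤ 2 * ∫ u in (-1:ℝ)..1, |φ' u| := by
    rw [← hsub]
    calc |∫ s in (-1:ℝ)..1, (φ x - φ s)| ≤ ∫ s in (-1:ℝ)..1, |φ x - φ s| :=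
          intervalIntegral.abs_integral_le_integral_abs (by norm_num)
      _ ≤ ∫ _s in (-1:ℝ)..1, (∫ u in (-1:ℝ)..1, |φ' u|) := by
          apply intervalIntegral.integral_mono_on (by norm_num)
            (((continuous_const.sub hφ).abs).intervalIntegrable _ _)
            intervalIntegrable_const hK
      _ = 2 * ∫ u in (-1:ℝ)..1, |φ' u| := by
          rw [intervalIntegral.integral_const]
          norm_num [two_smul]
  have heq : φ x - (∫ s in (-1:ℝ)..1, φ s) / 2 = (2 * φ x - ∫ s in (-1:ℝ)..1, φ s) / 2 := by ring
  rw [heq, abs_div]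
  rw [abs_of_nonneg (by norm_num : (0:ℝ) ≤ 2)]
  linarith

lemma cs1d {ψ : ℝ → ℝ} (hc : Continuous ψ) :
    (∫ t in (-1:ℝ)..1, |ψ t|) ^ 2 ≤ 2 * ∫ t in (-1:ℝ)..1, (ψ t) ^ 2 := by
  set I := ∫ t in (-1:ℝ)..1, |ψ t| with hI
  have habs : IntervalIntegrable (fun t => |ψ t|) volume (-1) 1 := (hc.abs).intervalIntegrable _ _
  have hsq : IntervalIntegrable (fun t => (ψ t) ^ 2) volume (-1) 1 :=
    ((hc.pow 2)).intervalIntegrable _ _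
  have h0 : (0:ℝ) ≤ ∫ t in (-1:ℝ)..1, (|ψ t| - I / 2) ^ 2 :=
    intervalIntegral.integral_nonneg (by norm_num) fun u _ => sq_nonneg _
  have hexp : ∫ t in (-1:ℝ)..1, (|ψ t| - I / 2) ^ 2
      = (∫ t in (-1:ℝ)..1, (ψ t) ^ 2) - I * I + (I / 2) ^ 2 * 2 := by
    have hpt : ∀ t : ℝ, (|ψ t| - I / 2) ^ 2 = (ψ t) ^ 2 - I * |ψ t| + (I / 2) ^ 2 := by
      intro t
      have := sq_abs (ψ t)
      nlinarith [this]
    simp_rw [hpt]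
    rw [intervalIntegral.integral_add (hsq.sub (habs.const_mul I)) intervalIntegrable_const,
      intervalIntegral.integral_sub hsq (habs.const_mul I),
      intervalIntegral.integral_const_mul, intervalIntegral.integral_const]
    simp [two_smul]
    ring
  nlinarith [h0, hexp]



lemma ii_eq_Ioo (g : ℝ → ℝ) : ∫ t in (-1:ℝ)..1, g t = ∫ t in Set.Ioo (-1:ℝ) 1, g t := by
  rw [intervalIntegral.integral_of_le (by norm_num), integral_Ioc_eq_integral_Ioo]

lemma contIntegrableOnCell {F : Pt → ℝ} (hF : Continuous F) :
    IntegrableOn F (Set.Ioo (-1:ℝ) 1 ×ˢ Set.Ioo (-1:ℝ) 1) :=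
  (hF.continuousOn.integrableOn_compact (isCompact_Icc.prod isCompact_Icc)).mono_set
    (Set.prod_mono Set.Ioo_subset_Icc_self Set.Ioo_subset_Icc_self)

lemma double_eq_cell {F : Pt → ℝ} (hF : Continuous F) :
    ∫ t in (-1:ℝ)..1, (∫ s in (-1:ℝ)..1, F (s, t)) = ∫ y in cell, F y := by
  rw [ii_eq_Ioo]
  simp_rw [ii_eq_Ioo]
  have hsw : Continuous (fun p : Pt => F (p.2, p.1)) := hF.comp continuous_swap
  have hInt : IntegrableOn (fun p : Pt => F (p.2, p.1))
      (Set.Ioo (-1:ℝ) 1 ×ˢ Set.Ioo (-1:ℝ) 1) := contIntegrableOnCell hsw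
  have h1 : ∫ t in Set.Ioo (-1:ℝ) 1, (∫ s in Set.Ioo (-1:ℝ) 1, F (s, t))
      = ∫ p in Set.Ioo (-1:ℝ) 1 ×ˢ Set.Ioo (-1:ℝ) 1, F (p.2, p.1) := by
    rw [show (volume : Measure Pt) = (volume : Measure ℝ).prod volume from Measure.volume_eq_prod ℝ ℝ]
      at hInt ⊢
    exact (setIntegral_prod _ hInt).symm
  rw [h1]
  show (∫ p in Set.Ioo (-1:ℝ) 1 ×ˢ Set.Ioo (-1:ℝ) 1, F (p.2, p.1)) = _
  have h2 : ∫ p in Set.Ioo (-1:ℝ) 1 ×ˢ Set.Ioo (-1:ℝ) 1, F (p.2, p.1)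
      = ∫ p in Set.Ioo (-1:ℝ) 1 ×ˢ Set.Ioo (-1:ℝ) 1, F p := by
    rw [show (volume : Measure Pt) = (volume : Measure ℝ).prod volume from Measure.volume_eq_prod ℝ ℝ,
      ← Measure.prod_restrict]
    exact integral_prod_swap F
  rw [h2]; rfl

lemma marginal_ii {F : Pt → ℝ} (hF : Continuous F) :
    IntervalIntegrable (fun t => ∫ s in (-1:ℝ)..1, F (s, t)) volume (-1) 1 := by
  simp_rw [ii_eq_Ioo]
  rw [intervalIntegrable_iff_integrableOn_Ioo_of_le (by norm_num)]
  have hsw : Continuous (fun p : Pt => F (p.2, p.1)) := hF.comp continuous_swap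
  have hInt : Integrable (fun p : Pt => F (p.2, p.1))
      (((volume : Measure ℝ).restrict (Set.Ioo (-1:ℝ) 1)).prod
        ((volume : Measure ℝ).restrict (Set.Ioo (-1:ℝ) 1))) := by
    rw [Measure.prod_restrict, ← Measure.volume_eq_prod]
    exact contIntegrableOnCell hsw
  exact hInt.integral_prod_left



set_option maxHeartbeats 1000000 in
lemma master {f h : Pt → ℝ} (hf : ContDiff ℝ (⊤:ℕ∞) f) (hh : ContDiff ℝ (⊤:ℕ∞) h)
    (hfh : ∀ y : Pt, p2 f y = h y)
    (hmean : ∀ x : ℝ, (∫ t in (-1:ℝ)..1, f (x, t)) = 0)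
    {y : Pt} (hy : y ∈ cell) :
    (f y) ^ 2 ≤ 5 * (L2sq h + L2sq (p1 h)) := by
  obtain ⟨x, τ⟩ := y
  obtain ⟨hx, hτ⟩ : x ∈ Set.Ioo (-1:ℝ) 1 ∧ τ ∈ Set.Ioo (-1:ℝ) 1 := hy
  have hhc : Continuous h := hh.continuous
  have hp1h : ContDiff ℝ (⊤:ℕ∞) (p1 h) := contDiff_p1 hh
  have hp1hc : Continuous (p1 h) := hp1h.continuous
  -- Step A
  have hA : |f (x, τ)| ≤ ∫ t in (-1:ℝ)..1, |h (x, t)| := by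
    have h1 := avg1d (φ := fun t => f (x, t)) (φ' := fun t => h (x, t))
      (fun u => by simpa [hfh] using hasDerivAt_slice2 hf x u)
      (by fun_prop) (Set.mem_Icc_of_Ioo hτ)
    rw [hmean x] at h1
    simpa using h1
  -- Step B
  have hB : (∫ t in (-1:ℝ)..1, |h (x, t)|) ^ 2 ≤ 2 * ∫ t in (-1:ℝ)..1, (h (x, t)) ^ 2 :=
    cs1d (ψ := fun t : ℝ => h (x, t)) (by fun_prop)
  -- Step C pointwise in t
  have hC : ∀ t : ℝ, (h (x, t)) ^ 2 ≤ (∫ s in (-1:ℝ)..1, (h (s, t)) ^ 2) / 2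
      + ∫ u in (-1:ℝ)..1, ((h (u, t)) ^ 2 + (p1 h (u, t)) ^ 2) := by
    intro t
    have hds : ∀ u : ℝ, HasDerivAt (fun s => (h (s, t)) ^ 2)
        (2 * h (u, t) * p1 h (u, t)) u := by
      intro u
      have := (hasDerivAt_slice1 hh t u).fun_pow 2
      simpa [mul_comm, mul_assoc, mul_left_comm] using this
    have hcd : Continuous (fun u : ℝ => 2 * h (u, t) * p1 h (u, t)) := by fun_prop
    have h1 := avg1d (φ := fun s => (h (s, t)) ^ 2)
      (φ' := fun u => 2 * h (u, t) * p1 h (u, t)) hds hcd (Set.mem_Icc_of_Ioo hx)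
    have h2 : (∫ u in (-1:ℝ)..1, |2 * h (u, t) * p1 h (u, t)|)
        ≤ ∫ u in (-1:ℝ)..1, ((h (u, t)) ^ 2 + (p1 h (u, t)) ^ 2) := by
      apply intervalIntegral.integral_mono_on (by norm_num)
        ((hcd.abs).intervalIntegrable _ _)
        (Continuous.intervalIntegrable
          (by fun_prop : Continuous fun u : ℝ => (h (u, t)) ^ 2 + (p1 h (u, t)) ^ 2) _ _)
      intro u _
      have h3 := sq_nonneg (|h (u, t)| - |p1 h (u, t)|)
      rw [abs_mul, abs_mul]
      have e2 : |(2:ℝ)| = 2 := by norm_num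
      rw [e2]
      nlinarith [sq_abs (h (u, t)), sq_abs (p1 h (u, t))]
    have h4 := (abs_le.mp h1).2
    linarith
  -- integrate Step C in t
  have hint1 : IntervalIntegrable (fun t => (h (x, t)) ^ 2) volume (-1) 1 :=
    Continuous.intervalIntegrable (by fun_prop) _ _
  have hRHS1 : IntervalIntegrable (fun t => (∫ s in (-1:ℝ)..1, (h (s, t)) ^ 2) / 2)
      volume (-1) 1 := (marginal_ii (F := fun p : Pt => (h p) ^ 2) (by fun_prop)).div_const 2
  have hRHS2 : IntervalIntegrable
      (fun t => ∫ u in (-1:ℝ)..1, ((h (u, t)) ^ 2 + (p1 h (u, t)) ^ 2)) volume (-1) 1 :=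
    marginal_ii (F := fun p : Pt => (h p) ^ 2 + (p1 h p) ^ 2) (by fun_prop)
  have hCint : (∫ t in (-1:ℝ)..1, (h (x, t)) ^ 2)
      ≤ ∫ t in (-1:ℝ)..1, ((∫ s in (-1:ℝ)..1, (h (s, t)) ^ 2) / 2
        + ∫ u in (-1:ℝ)..1, ((h (u, t)) ^ 2 + (p1 h (u, t)) ^ 2)) := by
    apply intervalIntegral.integral_mono_on (by norm_num) hint1 (hRHS1.add hRHS2)
    intro t _
    exact hC t
  rw [intervalIntegral.integral_add hRHS1 hRHS2] at hCint
  have e1 : (∫ t in (-1:ℝ)..1, (∫ s in (-1:ℝ)..1, (h (s, t)) ^ 2) / 2) = L2sq h / 2 := by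
    rw [intervalIntegral.integral_div, double_eq_cell (F := fun p : Pt => (h p) ^ 2) (by fun_prop)]
    rfl
  have e2 : (∫ t in (-1:ℝ)..1, ∫ u in (-1:ℝ)..1, ((h (u, t)) ^ 2 + (p1 h (u, t)) ^ 2))
      = L2sq h + L2sq (p1 h) := by
    rw [double_eq_cell (F := fun p : Pt => (h p) ^ 2 + (p1 h p) ^ 2) (by fun_prop)]
    have : L2sq h + L2sq (p1 h) = (∫ y in cell, (h y) ^ 2) + ∫ y in cell, (p1 h y) ^ 2 := rfl
    rw [this, ← integral_add]
    · exact contIntegrableOnCell ((hhc.pow 2))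
    · exact contIntegrableOnCell ((hp1hc.pow 2))
  rw [e1, e2] at hCint
  have h5 : (f (x, τ)) ^ 2 ≤ (∫ t in (-1:ℝ)..1, |h (x, t)|) ^ 2 := by
    rw [← sq_abs (f (x, τ))]
    have h6 : (0:ℝ) ≤ ∫ t in (-1:ℝ)..1, |h (x, t)| :=
      intervalIntegral.integral_nonneg (by norm_num) fun u _ => abs_nonneg _
    nlinarith [abs_nonneg (f (x, τ))]
  nlinarith [L2sq_nonneg h, L2sq_nonneg (p1 h)]

lemma meanzero_of_periodic {g : Pt → ℝ} (hg : ContDiff ℝ (⊤:ℕ∞) g)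
    (hper : ∀ y : Pt, g (y.1, y.2 + 2) = g y) (x : ℝ) :
    (∫ t in (-1:ℝ)..1, p2 g (x, t)) = 0 := by
  have hc : Continuous (p2 g) := (contDiff_p2 hg).continuous
  have hftc := intervalIntegral.integral_eq_sub_of_hasDerivAt
    (f := fun t => g (x, t)) (f' := fun t => p2 g (x, t)) (a := (-1:ℝ)) (b := 1)
    (fun t _ => hasDerivAt_slice2 hg x t)
    (Continuous.intervalIntegrable (by fun_prop) _ _)
  rw [hftc]
  have h2 := hper (x, -1)
  norm_num at h2
  show g (x, 1) - g (x, -1) = 0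
  rw [h2, sub_self]

lemma meanzero_of_odd {f : Pt → ℝ} (hodd : ∀ y : Pt, f (y.1, -y.2) = - f y)
    (hc : Continuous f) (x : ℝ) :
    (∫ t in (-1:ℝ)..1, f (x, t)) = 0 := by
  have h1 : (∫ t in (-1:ℝ)..1, f (x, -t)) = ∫ t in (-1:ℝ)..1, f (x, t) := by
    have := intervalIntegral.integral_comp_neg (a := (-1:ℝ)) (b := 1) (f := fun t => f (x, t))
    simpa using this
  have h2 : (∫ t in (-1:ℝ)..1, f (x, -t)) = - ∫ t in (-1:ℝ)..1, f (x, t) := by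
    have he : ∀ t : ℝ, f (x, -t) = - f (x, t) := fun t => hodd (x, t)
    simp_rw [he]
    exact intervalIntegral.integral_neg
  linarith

lemma odd_p1 {g : Pt → ℝ} (hg : ContDiff ℝ (⊤:ℕ∞) g)
    (hodd : ∀ y : Pt, g (y.1, -y.2) = - g y) (y : Pt) :
    p1 g (y.1, -y.2) = - p1 g y := by
  have h1 : HasDerivAt (fun s => g (s, -y.2)) (p1 g (y.1, -y.2)) y.1 :=
    hasDerivAt_slice1 hg (-y.2) y.1
  have h2 : HasDerivAt (fun s => g (s, -y.2)) (- p1 g (y.1, y.2)) y.1 := by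
    have he : (fun s => g (s, -y.2)) = fun s => - g (s, y.2) := funext fun s => hodd (s, y.2)
    rw [he]
    exact (hasDerivAt_slice1 hg y.2 y.1).neg
  have h3 := h1.unique h2
  simpa using h3

lemma pd00 (f : Pt → ℝ) : pd 0 0 f = f := rfl
lemma pd10 (f : Pt → ℝ) : pd 1 0 f = p1 f := rfl
lemma pd20 (f : Pt → ℝ) : pd 2 0 f = p1 (p1 f) := rfl
lemma pd01 (f : Pt → ℝ) : pd 0 1 f = p2 f := rfl
lemma pd02 (f : Pt → ℝ) : pd 0 2 f = p2 (p2 f) := rfl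
lemma pd11 (f : Pt → ℝ) : pd 1 1 f = p1 (p2 f) := rfl

lemma sobSq_one (f : Pt → ℝ) :
    sobSq 1 f = L2sq f + L2sq (p2 f) + L2sq (p1 f) := by
  simp [sobSq, Finset.sum_range_succ, pd00, pd01, pd10]

lemma sobSq_two (f : Pt → ℝ) :
    sobSq 2 f = L2sq f + L2sq (p2 f) + L2sq (p2 (p2 f))
      + L2sq (p1 f) + L2sq (p1 (p2 f)) + L2sq (p1 (p1 f)) := by
  simp [sobSq, Finset.sum_range_succ, pd00, pd01, pd02, pd10, pd11, pd20]
  ring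

lemma sobSq_nonneg (i : ℕ) (f : Pt → ℝ) : 0 ≤ sobSq i f :=
  Finset.sum_nonneg fun _ _ => Finset.sum_nonneg fun _ _ => L2sq_nonneg _

lemma det_algebra {A B C D S1 S2 r : ℝ} (hr0 : 0 ≤ r) (hr2 : r ^ 2 = 5) (hr3 : r ≤ 9/4)
    (hS1 : 0 ≤ S1) (hS2 : 0 ≤ S2) (h12 : S1 ≤ S2) (hsm : S2 ≤ 1/5)
    (hB : |B| ≤ r * S1) (hC : |C| ≤ r * S2) (hD : |D| ≤ r * S1)
    (hdet : (1 + A) * (1 + D) - B * C = 1) :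
    |A| ≤ 10 * S2 := by
  have hAeq : A = -D - A * D + B * C := by nlinarith
  have hAabs : |A| ≤ |D| + |A| * |D| + |B| * |C| := by
    conv_lhs => rw [hAeq]
    have e : -D - A * D + B * C = (-D + -(A * D)) + B * C := by ring
    rw [e]
    calc |(-D + -(A * D)) + B * C| ≤ |(-D + -(A * D))| + |B * C| := abs_add_le _ _
      _ ≤ |(-D)| + |(-(A * D))| + |B * C| := by linarith [abs_add_le (-D) (-(A * D))]
      _ = |D| + |A| * |D| + |B| * |C| := by rw [abs_neg, abs_neg, abs_mul, abs_mul]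
  have hrS1S2 : r * S1 ≤ r * S2 := mul_le_mul_of_nonneg_left h12 hr0
  have hrS2' : r * S2 ≤ 9/4 * S2 := mul_le_mul_of_nonneg_right hr3 hS2
  have hDhalf : |D| ≤ 1/2 := by
    have h94 : (9:ℝ)/4 * S2 ≤ 9/20 := by linarith
    linarith
  have k0 : (r * S1) * (r * S2) = 5 * (S1 * S2) := by
    have : (r * S1) * (r * S2) = r ^ 2 * (S1 * S2) := by ring
    rw [this, hr2]
  have k1 : S1 * S2 ≤ S2 * S2 := mul_le_mul_of_nonneg_right h12 hS2
  have k2 : S2 * S2 ≤ (1/5) * S2 := mul_le_mul_of_nonneg_right hsm hS2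
  have hBC : |B| * |C| ≤ S2 := by
    have := mul_le_mul hB hC (abs_nonneg C) (mul_nonneg hr0 hS1)
    rw [k0] at this
    linarith
  have h1 : |A| * |D| ≤ |A| * (1/2) := mul_le_mul_of_nonneg_left hDhalf (abs_nonneg A)
  linarith

lemma abs_le_sqrt5_mul {a s : ℝ} (hs : 0 ≤ s) (h : a ^ 2 ≤ 5 * s ^ 2) :
    |a| ≤ Real.sqrt 5 * s := by
  have hr0 : (0:ℝ) ≤ Real.sqrt 5 := Real.sqrt_nonneg 5
  have hr2 : Real.sqrt 5 ^ 2 = 5 := Real.sq_sqrt (by norm_num)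
  calc |a| = Real.sqrt (a ^ 2) := (Real.sqrt_sq_eq_abs a).symm
    _ ≤ Real.sqrt ((Real.sqrt 5 * s) ^ 2) := Real.sqrt_le_sqrt (by nlinarith)
    _ = Real.sqrt 5 * s := by rw [Real.sqrt_sq (mul_nonneg hr0 hs)]

/-- there are constants `δ ∈ (0,1]`, `c₀ > 0` such that for every
smooth 2-periodic map `η` satisfying the odevity conditions, `det(I + ∇η) = 1` and
`‖∂₂η‖₂ ≤ δ`, one has `‖∂₁η_j‖_{L^∞} ≤ c₀‖∂₂η‖₂` and `‖∂₂η_j‖_{L^∞} ≤ c₀‖∂₂²η‖₁`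
for `j = 1, 2`, the `L^∞` norms being taken over the periodic cell. -/
theorem statement10 :
    ∃ δ c₀ : ℝ, 0 < δ ∧ δ ≤ 1 ∧ 0 < c₀ ∧
      ∀ η : Pt → Pt, ContDiff ℝ (⊤ : ℕ∞) η →
        Periodic2 (comp1 η) → Periodic2 (comp2 η) → Odev η → DetCond η →
        sobV 2 (d2V η) ≤ δ →
        ∀ y ∈ cell,
          |p1 (comp1 η) y| ≤ c₀ * sobV 2 (d2V η) ∧
          |p1 (comp2 η) y| ≤ c₀ * sobV 2 (d2V η) ∧
          |p2 (comp1 η) y| ≤ c₀ * sobV 1 (d2V (d2V η)) ∧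
          |p2 (comp2 η) y| ≤ c₀ * sobV 1 (d2V (d2V η)) := by
  refine ⟨1/5, 10, by norm_num, by norm_num, by norm_num, ?_⟩
  intro η hη hper1 hper2 hodev hdet hsmall y hy
  have hη1 : ContDiff ℝ (⊤:ℕ∞) (comp1 η) := contDiff_fst.comp hη
  have hη2 : ContDiff ℝ (⊤:ℕ∞) (comp2 η) := contDiff_snd.comp hη
  set g1 := p2 (comp1 η) with hg1def
  set g2 := p2 (comp2 η) with hg2def
  have hg1 : ContDiff ℝ (⊤:ℕ∞) g1 := contDiff_p2 hη1
  have hg2 : ContDiff ℝ (⊤:ℕ∞) g2 := contDiff_p2 hη2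
  have hc1 : comp1 (d2V η) = g1 := rfl
  have hc2 : comp2 (d2V η) = g2 := rfl
  have hcc1 : comp1 (d2V (d2V η)) = p2 g1 := rfl
  have hcc2 : comp2 (d2V (d2V η)) = p2 g2 := rfl
  set S2 := sobV 2 (d2V η) with hS2def
  set S1 := sobV 1 (d2V (d2V η)) with hS1def
  have hS2nn : 0 ≤ S2 := Real.sqrt_nonneg _
  have hS1nn : 0 ≤ S1 := Real.sqrt_nonneg _
  have hS2sq : S2 ^ 2 = sobSq 2 g1 + sobSq 2 g2 := by
    rw [hS2def, sobV, hc1, hc2, Real.sq_sqrt (add_nonneg (sobSq_nonneg 2 g1) (sobSq_nonneg 2 g2))]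
  have hS1sq : S1 ^ 2 = sobSq 1 (p2 g1) + sobSq 1 (p2 g2) := by
    rw [hS1def, sobV, hcc1, hcc2, Real.sq_sqrt (add_nonneg (sobSq_nonneg 1 (p2 g1)) (sobSq_nonneg 1 (p2 g2)))]
  -- S1 ≤ S2
  have hS1S2 : S1 ≤ S2 := by
    rw [hS1def, hS2def, sobV, sobV, hc1, hc2, hcc1, hcc2]
    apply Real.sqrt_le_sqrt
    have e1 : sobSq 1 (p2 g1) ≤ sobSq 2 g1 := by
      rw [sobSq_one, sobSq_two]
      have n1 := L2sq_nonneg g1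
      have n2 := L2sq_nonneg (p1 g1)
      have n3 := L2sq_nonneg (p1 (p1 g1))
      linarith
    have e2 : sobSq 1 (p2 g2) ≤ sobSq 2 g2 := by
      rw [sobSq_one, sobSq_two]
      have n1 := L2sq_nonneg g2
      have n2 := L2sq_nonneg (p1 g2)
      have n3 := L2sq_nonneg (p1 (p1 g2))
      linarith
    linarith
  -- pointwise bound for p2 (comp1 η) = g1
  have hB1 : (g1 y) ^ 2 ≤ 5 * S1 ^ 2 := by
    have hm := master (f := g1) (h := p2 g1) hg1 (contDiff_p2 hg1)
      (fun z => rfl) (meanzero_of_periodic hη1 hper1.2) hy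
    have hterm : L2sq (p2 g1) + L2sq (p1 (p2 g1)) ≤ sobSq 1 (p2 g1) := by
      rw [sobSq_one]
      have := L2sq_nonneg (p2 (p2 g1))
      linarith
    have hpos := sobSq_nonneg 1 (p2 g2)
    rw [hS1sq]
    linarith
  have hB2 : (g2 y) ^ 2 ≤ 5 * S1 ^ 2 := by
    have hm := master (f := g2) (h := p2 g2) hg2 (contDiff_p2 hg2)
      (fun z => rfl) (meanzero_of_periodic hη2 hper2.2) hy
    have hterm : L2sq (p2 g2) + L2sq (p1 (p2 g2)) ≤ sobSq 1 (p2 g2) := by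
      rw [sobSq_one]
      have := L2sq_nonneg (p2 (p2 g2))
      linarith
    have hpos := sobSq_nonneg 1 (p2 g1)
    rw [hS1sq]
    linarith
  -- pointwise bound for p1 (comp2 η)
  have hB3 : (p1 (comp2 η) y) ^ 2 ≤ 5 * S2 ^ 2 := by
    have hodd2 : ∀ z : Pt, comp2 η (z.1, -z.2) = - comp2 η z := fun z => (hodev z).2
    have hfh : ∀ z : Pt, p2 (p1 (comp2 η)) z = p1 g2 z := by
      intro z
      rw [hg2def, ← p1_p2_comm hη2]
    have hm := master (f := p1 (comp2 η)) (h := p1 g2) (contDiff_p1 hη2)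
      (contDiff_p1 hg2) hfh
      (meanzero_of_odd (odd_p1 hη2 hodd2) (contDiff_p1 hη2).continuous) hy
    have hterm : L2sq (p1 g2) + L2sq (p1 (p1 g2)) ≤ sobSq 2 g2 := by
      rw [sobSq_two]
      have n1 := L2sq_nonneg g2
      have n2 := L2sq_nonneg (p2 g2)
      have n3 := L2sq_nonneg (p2 (p2 g2))
      have n4 := L2sq_nonneg (p1 (p2 g2))
      linarith
    have hpos := sobSq_nonneg 2 g1
    rw [hS2sq]
    linarith
  -- numeric facts about sqrt 5
  have hr2 : Real.sqrt 5 ^ 2 = 5 := Real.sq_sqrt (by norm_num)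
  have hr0 : 0 ≤ Real.sqrt 5 := Real.sqrt_nonneg 5
  have hr3 : Real.sqrt 5 ≤ 9/4 := by nlinarith
  -- convert squares to abs bounds
  have habs1 : |g1 y| ≤ Real.sqrt 5 * S1 := abs_le_sqrt5_mul hS1nn hB1
  have habs2 : |g2 y| ≤ Real.sqrt 5 * S1 := abs_le_sqrt5_mul hS1nn hB2
  have habs3 : |p1 (comp2 η) y| ≤ Real.sqrt 5 * S2 := abs_le_sqrt5_mul hS2nn hB3
  have hsmall' : S2 ≤ 1/5 := hsmall
  have hA : |p1 (comp1 η) y| ≤ 10 * S2 :=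
    det_algebra hr0 hr2 hr3 hS1nn hS2nn hS1S2 hsmall' habs1 habs3 habs2 (hdet y)
  have hq2 : Real.sqrt 5 * S2 ≤ 9/4 * S2 := mul_le_mul_of_nonneg_right hr3 hS2nn
  have hq1 : Real.sqrt 5 * S1 ≤ 9/4 * S1 := mul_le_mul_of_nonneg_right hr3 hS1nn
  exact ⟨hA, by linarith, by linarith, by linarith⟩
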